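/- Let A be a finite nonempty set, let S : A^ℕ → A^ℕ be the shift map, and let F be a nonempty compact invariant subset of A^ℕ. Then the poset 𝒜(F) of finite words occurring as initial segments of members of F, under the factor ordering, has minimal type if and only if F is a minimal nonempty compact invariant subset of A^ℕ. -/

import Mathlib

open Set

/-- `s` is an initial segment of the finite set `t` (w.r.t. increasing enumerations). -/
def InitSeg (s t : Finset ℕ) : Prop :=
  s ⊆ t ∧ ∀ x ∈ s, ∀ y ∈ t, y ∉ s → x < y

/-- `s` is an initial segment of the set `X ⊆ ℕ`. -/
def InitSegSet (s : Finset ℕ) (X : Set ℕ) : Prop :=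
  ↑s ⊆ X ∧ ∀ x ∈ s, ∀ y ∈ X, y ∉ s → x < y

/-- The union of a family of finite subsets of `ℕ`. -/
def unionOf (B : Set (Finset ℕ)) : Set ℕ := ⋃ s ∈ B, (s : Set ℕ)

/-- `B` is a block: `B` is infinite and every infinite subset of `⋃ B` has a nonempty
initial segment belonging to `B`. -/
def IsBlock (B : Set (Finset ℕ)) : Prop :=
  B.Infinite ∧ ∀ X : Set ℕ, X ⊆ unionOf B → X.Infinite →
    ∃ s ∈ B, s.Nonempty ∧ InitSegSet s X

/-- `B` is a barrier: a block no member of which is a proper subset of another member. -/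
def IsBarrier (B : Set (Finset ℕ)) : Prop :=
  IsBlock B ∧ ∀ s ∈ B, ∀ t ∈ B, s ⊆ t → s = t

/-- `B` is a thin block: a block which is an antichain under the initial-segment order. -/
def IsThinBlock (B : Set (Finset ℕ)) : Prop :=
  IsBlock B ∧ ∀ s ∈ B, ∀ t ∈ B, InitSeg s t → s = t

/-- `s ◁ t`: there is `r` such that `s` is a proper initial segment of `r` and `t` is
obtained from `r` by removing its least element. -/
def Tri (s t : Finset ℕ) : Prop :=
  ∃ r : Finset ℕ, InitSeg s r ∧ s ≠ r ∧ ∃ a ∈ r, (∀ b ∈ r, a ≤ b) ∧ t = r.erase a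

/-- The map `f` is good on `B` w.r.t. the quasi-order `le`. -/
def GoodPair {Q : Type*} (le : Q → Q → Prop) (B : Set (Finset ℕ)) (f : Finset ℕ → Q) : Prop :=
  ∃ s ∈ B, ∃ t ∈ B, Tri s t ∧ le (f s) (f t)

/-- A quasi-order is better-quasi-ordered if every map from every barrier into it is good. -/
def IsBqo {Q : Type*} (le : Q → Q → Prop) : Prop :=
  ∀ B : Set (Finset ℕ), IsBarrier B → ∀ f : Finset ℕ → Q, GoodPair le B f

/-- A quasi-order is well-quasi-ordered if it has no infinite strictly descending sequence
and no infinite antichain. -/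
def IsWqo {Q : Type*} (le : Q → Q → Prop) : Prop :=
  (¬ ∃ f : ℕ → Q, ∀ n, le (f (n + 1)) (f n) ∧ ¬ le (f n) (f (n + 1))) ∧
    ¬ ∃ f : ℕ → Q, ∀ m n : ℕ, m ≠ n → ¬ le (f m) (f n)

/-- The strict lexicographic order on finite subsets of `ℕ` (via increasing enumerations;
a proper initial segment is lexicographically smaller). -/
def lexLT (s t : Finset ℕ) : Prop :=
  List.Lex (· < ·) (s.sort (· ≤ ·)) (t.sort (· ≤ ·))

/-- The order type of `B` under the lexicographic order is at most `α`: there is a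
map of `B` into the ordinals `< α` which is strictly increasing w.r.t. `lexLT`. -/
def TypeLE (B : Set (Finset ℕ)) (α : Ordinal) : Prop :=
  ∃ g : Finset ℕ → Ordinal, (∀ s ∈ B, g s < α) ∧
    ∀ s ∈ B, ∀ t ∈ B, lexLT s t → g s < g t

/-- A quasi-order is `α`-better-quasi-ordered if every map from a barrier of order type
at most `α` into it is good. -/
def IsAlphaBqo (α : Ordinal) {Q : Type*} (le : Q → Q → Prop) : Prop :=
  ∀ B : Set (Finset ℕ), IsBarrier B → TypeLE B α →
    ∀ f : Finset ℕ → Q, GoodPair le B f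

/-- Domination quasi-order on subsets of a quasi-ordered set. -/
def DomRel {Q : Type*} (le : Q → Q → Prop) (A B : Set Q) : Prop :=
  ∀ a ∈ A, ∃ b ∈ B, le a b

/-- `I` is an ideal: nonempty, downward closed and up-directed. -/
def IsIdealRel {Q : Type*} (le : Q → Q → Prop) (I : Set Q) : Prop :=
  I.Nonempty ∧ (∀ x y, le x y → y ∈ I → x ∈ I) ∧
    ∀ x ∈ I, ∀ y ∈ I, ∃ z ∈ I, le x z ∧ le y z

/-- `I` is principal: it has a greatest element. -/
def IsPrincipalRel {Q : Type*} (le : Q → Q → Prop) (I : Set Q) : Prop :=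
  ∃ a ∈ I, ∀ x ∈ I, le x a

/-- A maximal antichain: an antichain not properly contained in any other antichain. -/
def IsMaxAntichainRel {Q : Type*} (le : Q → Q → Prop) (A : Set Q) : Prop :=
  IsAntichain le A ∧ ∀ B : Set Q, IsAntichain le B → A ⊆ B → A = B

/-- An interval order: no `a < b`, `c < d` with each of `a, b` incomparable to each
of `c, d`. -/
def IsIntervalOrder (P : Type*) [Preorder P] : Prop :=
  ¬ ∃ a b c d : P, a < b ∧ c < d ∧
    ¬ a ≤ c ∧ ¬ c ≤ a ∧ ¬ a ≤ d ∧ ¬ d ≤ a ∧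
    ¬ b ≤ c ∧ ¬ c ≤ b ∧ ¬ b ≤ d ∧ ¬ d ≤ b

/-- `a ≤_pred b` iff every strict predecessor of `a` is a strict predecessor of `b`. -/
def predLE {P : Type*} [PartialOrder P] (a b : P) : Prop := ∀ x, x < a → x < b

/-- `a ≤_succ b` iff every strict successor of `b` is a strict successor of `a`. -/
def succLE {P : Type*} [PartialOrder P] (a b : P) : Prop := ∀ y, b < y → a < y

/-- `a ≤_crit b` iff `a ≤_pred b` and `a ≤_succ b`. -/
def critLE {P : Type*} [PartialOrder P] (a b : P) : Prop := predLE a b ∧ succLE a b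

/-- The shift map on `A^ℕ`. -/
def shiftMap {A : Type*} : (ℕ → A) → (ℕ → A) := fun f n => f (n + 1)

/-- The factor ordering on words: `u ≤ v` iff `u` is a contiguous subword of `v`. -/
def FactorLE {A : Type*} (u v : List A) : Prop := ∃ l r : List A, v = l ++ u ++ r

/-- The set of nonempty finite words which occur as initial segments of members of `F`. -/
def WordsOf {A : Type*} (F : Set (ℕ → A)) : Set (List A) :=
  {w | w ≠ [] ∧ ∃ f ∈ F, ∀ i : ℕ, ∀ h : i < w.length, w.get ⟨i, h⟩ = f i}

namespace Stmt14aux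

variable {A : Type*}

/-- prefix of length n -/
def pref (f : ℕ → A) (n : ℕ) : List A := List.ofFn (fun i : Fin n => f i)

lemma pref_length (f : ℕ → A) (n : ℕ) : (pref f n).length = n := List.length_ofFn

lemma pref_get (f : ℕ → A) (n i : ℕ) (h : i < (pref f n).length) :
    (pref f n).get ⟨i, h⟩ = f i := by
  simp [pref]

lemma pref_mem {F : Set (ℕ → A)} {f : ℕ → A} (hf : f ∈ F) (n : ℕ) (hn : n ≠ 0) :
    pref f n ∈ WordsOf F := by
  refine ⟨by simp [pref, hn, List.length_eq_zero_iff, pref_length], f, hf, ?_⟩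
  intro i h
  exact pref_get f n i h

/-- the k-fold shift -/
lemma shift_mem {F : Set (ℕ → A)} (hinv : shiftMap '' F ⊆ F) {f : ℕ → A} (hf : f ∈ F)
    (k : ℕ) : (fun n => f (n + k)) ∈ F := by
  induction k with
  | zero => simpa using hf
  | succ k ih =>
      have : (fun n => f (n + (k+1))) = shiftMap (fun n => f (n + k)) := by
        funext n; simp [shiftMap]; ring_nf
      rw [this]
      exact hinv ⟨_, ih, rfl⟩

lemma words_factor {F : Set (ℕ → A)} (hinv : shiftMap '' F ⊆ F) {u v : List A}
    (hu : u ≠ []) (huv : FactorLE u v) (hv : v ∈ WordsOf F) : u ∈ WordsOf F := by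
  obtain ⟨l, r, rfl⟩ := huv
  obtain ⟨-, f, hf, hpre⟩ := hv
  refine ⟨hu, fun n => f (n + l.length), shift_mem hinv hf l.length, ?_⟩
  intro i h
  have hlen : l.length + i < (l ++ u ++ r).length := by
    simp [List.length_append]; omega
  have := hpre (l.length + i) hlen
  show u.get ⟨i, h⟩ = f (i + l.length)
  rw [Nat.add_comm i l.length, ← this]
  have key : u[i]'h = (l ++ u ++ r)[l.length + i]'hlen := by
    rw [List.getElem_append_left' h r, List.getElem_append_right' l (by simp; omega)]
    congr 1
    · rw [List.append_assoc]
    · omega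
  simpa using key

end Stmt14aux

section Part2
open Stmt14aux Filter
variable {A : Type*} [TopologicalSpace A] [DiscreteTopology A]

lemma mem_of_prefixes {G : Set (ℕ → A)} (hG : IsClosed G) (f : ℕ → A)
    (h : ∀ n : ℕ, ∃ g ∈ G, ∀ i < n, g i = f i) : f ∈ G := by
  choose g hg hagree using h
  have htend : Tendsto g atTop (nhds f) := by
    rw [tendsto_pi_nhds]
    intro i
    rw [nhds_discrete, Filter.tendsto_pure]
    filter_upwards [Filter.eventually_ge_atTop (i+1)] with n hn
    exact hagree n i (by omega)
  exact hG.mem_of_tendsto htend (Filter.Eventually.of_forall hg)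

def occursAt (u : List A) (k : ℕ) (f : ℕ → A) : Prop :=
  ∀ i (h : i < u.length), f (k + i) = u.get ⟨i, h⟩

lemma isOpen_occursAt (u : List A) (k : ℕ) : IsOpen {f : ℕ → A | occursAt u k f} := by
  have he : {f : ℕ → A | occursAt u k f} =
      ⋂ i : Fin u.length, (fun f : ℕ → A => f (k + i)) ⁻¹' {u.get i} := by
    ext f
    simp only [Set.mem_setOf_eq, Set.mem_iInter, Set.mem_preimage, Set.mem_singleton_iff]
    constructor
    · intro h i; exact h i i.isLt
    · intro h i hi; exact h ⟨i, hi⟩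
  rw [he]
  refine isOpen_iInter_of_finite fun i => IsOpen.preimage ?_ (isOpen_discrete {u.get i})
  exact continuous_apply (k + (i : ℕ))

lemma uniform_occurrence {F : Set (ℕ → A)} (hcomp : IsCompact F) (hinv : shiftMap '' F ⊆ F)
    (hmin : ∀ G : Set (ℕ → A), G ⊆ F → G.Nonempty → IsCompact G → shiftMap '' G ⊆ G → G = F)
    {u : List A} (hu : u ∈ WordsOf F) :
    ∃ K : ℕ, ∀ f ∈ F, ∃ k ≤ K, occursAt u k f := by
  have hall : ∀ f ∈ F, ∃ k, occursAt u k f := by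
    by_contra hc
    push_neg at hc
    obtain ⟨f0, hf0, hf0no⟩ := hc
    set G : Set (ℕ → A) := F ∩ {f | ∀ k, ¬ occursAt u k f} with hGdef
    have hGcl : IsClosed {f : ℕ → A | ∀ k, ¬ occursAt u k f} := by
      have : {f : ℕ → A | ∀ k, ¬ occursAt u k f} = (⋃ k, {f | occursAt u k f})ᶜ := by
        ext f; simp [Set.mem_iUnion]
      rw [this]
      exact (isOpen_iUnion fun k => isOpen_occursAt u k).isClosed_compl
    have hGinv : shiftMap '' G ⊆ G := by
      rintro _ ⟨g, ⟨hgF, hgno⟩, rfl⟩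
      refine ⟨hinv ⟨g, hgF, rfl⟩, fun k hk => hgno (k+1) ?_⟩
      intro i hi
      have := hk i hi
      simpa [shiftMap, Nat.add_right_comm] using this
    have hGF := hmin G Set.inter_subset_left ⟨f0, hf0, hf0no⟩ (hcomp.inter_right hGcl) hGinv
    obtain ⟨hune, f, hfF, hpre⟩ := hu
    rw [← hGF] at hfF
    exact hfF.2 0 (fun i hi => by simpa using (hpre i hi).symm)
  have hcover : F ⊆ ⋃ k : ℕ, {f | occursAt u k f} := fun f hf => by
    obtain ⟨k, hk⟩ := hall f hf; exact Set.mem_iUnion.2 ⟨k, hk⟩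
  obtain ⟨t, ht⟩ := hcomp.elim_finite_subcover _ (fun k => isOpen_occursAt u k) hcover
  rcases t.eq_empty_or_nonempty with h0 | hne'
  · exact ⟨0, fun f hf => absurd (ht hf) (by simp [h0])⟩
  · refine ⟨t.max' hne', fun f hf => ?_⟩
    obtain ⟨k, hk, hok⟩ := Set.mem_iUnion₂.1 (ht hf)
    exact ⟨k, t.le_max' k hk, hok⟩

end Part2

section Part3
open Stmt14aux
variable {A : Type*} [TopologicalSpace A] [DiscreteTopology A]

lemma factor_of_long {F : Set (ℕ → A)} {u v : List A} (hv : v ∈ WordsOf F)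
    {K : ℕ} (hK : ∀ f ∈ F, ∃ k ≤ K, occursAt u k f) (hlen : K + u.length ≤ v.length) :
    FactorLE u v := by
  obtain ⟨-, f, hfF, hpre⟩ := hv
  obtain ⟨k, hkK, hocc⟩ := hK f hfF
  have hkl : k + u.length ≤ v.length := by omega
  have hu : u = (v.drop k).take u.length := by
    apply List.ext_getElem
    · simp; omega
    · intro i h1 h2
      rw [List.getElem_take, List.getElem_drop]
      have hiv : k + i < v.length := by omega
      have h3 := hpre (k + i) hiv
      rw [List.get_eq_getElem] at h3
      have h4 := hocc i h1
      rw [List.get_eq_getElem] at h4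
      rw [h3, h4]
  refine ⟨v.take k, (v.drop k).drop u.length, ?_⟩
  conv_lhs => rw [← List.take_append_drop k v, ← List.take_append_drop u.length (v.drop k)]
  rw [← hu, List.append_assoc]

end Part3

open Stmt14aux in
/-- For a finite nonempty alphabet `A` and a nonempty compact shift-invariant subset `F`
of `A^ℕ`: the poset `𝒜(F)` of finite words occurring as initial segments of members of
`F`, under the factor ordering, has minimal type if and only if `F` is a minimal
nonempty compact invariant set. -/

theorem stmt14 {A : Type*} [Fintype A] [Nonempty A]
    [TopologicalSpace A] [DiscreteTopology A]
    (F : Set (ℕ → A)) (hne : F.Nonempty) (hcomp : IsCompact F)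
    (hinv : shiftMap '' F ⊆ F) :
    ((WordsOf F).Infinite ∧
      ∀ I : Set (WordsOf F),
        (∀ u v : WordsOf F, FactorLE u.1 v.1 → v ∈ I → u ∈ I) → I ≠ Set.univ → I.Finite) ↔
    (∀ G : Set (ℕ → A), G ⊆ F → G.Nonempty → IsCompact G → shiftMap '' G ⊆ G → G = F) := by
  constructor
  · rintro ⟨-, hI⟩ G hGF hGne hGco hGinv
    by_contra hne'
    set I : Set (WordsOf F) := {w | w.1 ∈ WordsOf G} with hIdef
    have hdc : ∀ u v : WordsOf F, FactorLE u.1 v.1 → v ∈ I → u ∈ I :=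
      fun u v huv hv => words_factor hGinv u.2.1 huv hv
    have hIuniv : I ≠ Set.univ := by
      intro hIu
      apply hne'
      refine Set.Subset.antisymm hGF fun f hf => ?_
      apply mem_of_prefixes hGco.isClosed
      intro n
      rcases Nat.eq_zero_or_pos n with h0 | hpos
      · obtain ⟨g, hg⟩ := hGne; exact ⟨g, hg, fun i hi => by omega⟩
      · have hw : pref f n ∈ WordsOf F := pref_mem hf n (by omega)
        have : (⟨pref f n, hw⟩ : WordsOf F) ∈ I := hIu ▸ Set.mem_univ _
        obtain ⟨-, g, hgG, hpre⟩ := this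
        refine ⟨g, hgG, fun i hi => ?_⟩
        have h1 := hpre i (by rw [pref_length]; omega)
        rw [pref_get] at h1
        exact h1.symm
    have hfin := hI I hdc hIuniv
    obtain ⟨g, hg⟩ := hGne
    have : I.Infinite := by
      apply Set.infinite_of_injective_forall_mem
        (f := fun n : ℕ => (⟨pref g (n+1), pref_mem (hGF hg) (n+1) (by omega)⟩ : WordsOf F))
      · intro m n hmn
        have : (pref g (m+1)).length = (pref g (n+1)).length := by
          rw [Subtype.mk_eq_mk.1 hmn]
        rw [pref_length, pref_length] at this
        omega
      · intro n
        exact pref_mem hg (n+1) (by omega)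
    exact this hfin
  · intro hmin
    constructor
    · obtain ⟨f, hf⟩ := hne
      apply Set.infinite_of_injective_forall_mem (f := fun n : ℕ => pref f (n+1))
      · intro m n hmn
        have : (pref f (m+1)).length = (pref f (n+1)).length := congrArg List.length hmn
        rw [pref_length, pref_length] at this
        omega
      · intro n
        exact pref_mem hf (n+1) (by omega)
    · intro I hdc hIne
      obtain ⟨u, hu⟩ := Set.ne_univ_iff_exists_notMem I |>.1 hIne
      obtain ⟨K, hK⟩ := uniform_occurrence hcomp hinv hmin u.2
      have hsub : I ⊆ Subtype.val ⁻¹' {l : List A | l.length ≤ K + u.1.length} := by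
        intro v hv
        simp only [Set.mem_preimage, Set.mem_setOf_eq]
        by_contra hlong
        push_neg at hlong
        have hfac : FactorLE u.1 v.1 := factor_of_long v.2 hK (by omega)
        exact hu (hdc u v hfac hv)
      have hfin : {l : List A | l.length ≤ K + u.1.length}.Finite := List.finite_length_le _ _
      exact (hfin.preimage Subtype.val_injective.injOn).subset hsub
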